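/- Let b : ℝ₊ → ℝ₊ be continuous with b(x) > 0 for x > 0, differentiable on (0,∞), with limsup_{x→∞} (x·b'(x)/b(x)) = β < 1, and suppose B(x) = ∫₀ˣ b(u) du → ∞ as x → ∞. Then there exist δ ∈ (1,2) and C < ∞ such that b(x)² ≤ C·(1 + B(x)^{2−δ}) for all x ≥ 0. -/

import Mathlib

open Filter

/-- If `b : ℝ₊ → ℝ₊` is continuous, positive on `(0,∞)`, differentiable on `(0,∞)`,
`limsup_{x→∞} x b'(x)/b(x) = β < 1`, and `B(x) = ∫₀ˣ b(u) du → ∞`, then there exist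
`δ ∈ (1,2)` and `C < ∞` with `b(x)² ≤ C (1 + B(x)^{2-δ})` for all `x ≥ 0`. -/
theorem stmt3 (b : ℝ → ℝ) (β : ℝ)
    (hb0 : ∀ x ≥ 0, 0 ≤ b x)
    (hbpos : ∀ x > 0, 0 < b x)
    (hcont : ContinuousOn b (Set.Ici 0))
    (hdiff : ∀ x > 0, DifferentiableAt ℝ b x)
    (hbdd : IsBoundedUnder (· ≤ ·) atTop (fun x => x * deriv b x / b x))
    (hβ : limsup (fun x => x * deriv b x / b x) atTop = β)
    (hβ1 : β < 1)
    (hB : Tendsto (fun x => ∫ u in (0:ℝ)..x, b u) atTop atTop) :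
    ∃ δ ∈ Set.Ioo (1:ℝ) 2, ∃ C : ℝ,
      ∀ x ≥ 0, (b x) ^ 2 ≤ C * (1 + (∫ u in (0:ℝ)..x, b u) ^ (2 - δ)) := by
  -- choose γ ∈ (max β 0, 1)
  obtain ⟨γ, hγ0, hγ1, hβγ⟩ : ∃ γ : ℝ, 0 < γ ∧ γ < 1 ∧ β < γ := by
    refine ⟨(max β 0 + 1) / 2, ?_, ?_, ?_⟩
    · have := le_max_right β 0; linarith
    · have := max_lt hβ1 one_pos; linarith
    · have h1 := le_max_left β 0; have h2 := max_lt hβ1 one_pos; linarith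
  -- eventually x b'/b < γ
  have hev : ∀ᶠ x in atTop, x * deriv b x / b x < γ :=
    eventually_lt_of_limsup_lt (by rw [hβ]; exact hβγ) hbdd
  obtain ⟨a, ha⟩ := eventually_atTop.mp hev
  obtain ⟨x₀, hx₀1, hx₀a⟩ : ∃ x₀ : ℝ, 1 ≤ x₀ ∧ a ≤ x₀ :=
    ⟨max a 1, le_max_right _ _, le_max_left _ _⟩
  have hx₀pos : 0 < x₀ := lt_of_lt_of_le one_pos hx₀1
  have hder : ∀ x, x₀ ≤ x → x * deriv b x ≤ γ * b x := by
    intro x hx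
    have hxpos : 0 < x := lt_of_lt_of_le hx₀pos hx
    have hbx : 0 < b x := hbpos x hxpos
    have := ha x (le_trans hx₀a hx)
    calc x * deriv b x = (x * deriv b x / b x) * b x := by field_simp
    _ ≤ γ * b x := by nlinarith
  -- antitone of b x * x^(-γ) on Ici x₀
  have hanti : AntitoneOn (fun x => b x * x ^ (-γ)) (Set.Ici x₀) := by
    apply antitoneOn_of_deriv_nonpos (convex_Ici x₀)
    · apply ContinuousOn.mul
      · exact hcont.mono (fun y hy => le_trans hx₀pos.le hy)
      · apply ContinuousOn.rpow_const continuousOn_id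
        intro y hy
        exact Or.inl (ne_of_gt (lt_of_lt_of_le hx₀pos hy))
    · rw [interior_Ici]
      intro x hx
      have hxpos : 0 < x := lt_trans hx₀pos hx
      exact ((hdiff x hxpos).mul
        ((Real.hasDerivAt_rpow_const (p := -γ) (Or.inl (ne_of_gt hxpos))).differentiableAt)).differentiableWithinAt
    · rw [interior_Ici]
      intro x hx
      have hxpos : 0 < x := lt_trans hx₀pos hx
      have h1 : HasDerivAt b (deriv b x) x := (hdiff x hxpos).hasDerivAt
      have h2 : HasDerivAt (fun y : ℝ => y ^ (-γ)) (-γ * x ^ (-γ - 1)) x :=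
        Real.hasDerivAt_rpow_const (Or.inl (ne_of_gt hxpos))
      rw [HasDerivAt.deriv (f := fun y => b y * y ^ (-γ)) (h1.mul h2)]
      have ht : 0 < x ^ (-γ - 1) := Real.rpow_pos_of_pos hxpos _
      have hxx : x ^ (-γ) = x * x ^ (-γ - 1) := by
        rw [show x ^ (-γ) = x ^ ((1:ℝ) + (-γ - 1)) by rw [show (1:ℝ) + (-γ - 1) = -γ by ring],
          Real.rpow_add hxpos, Real.rpow_one]
      have hd := hder x hx.le
      rw [hxx]
      nlinarith [mul_nonneg (sub_nonneg.mpr hd) ht.le]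
  -- upper bound b x ≤ K x^γ
  obtain ⟨K, hK, hKdef⟩ : ∃ K : ℝ, 0 < K ∧ K = b x₀ * x₀ ^ (-γ) :=
    ⟨_, mul_pos (hbpos x₀ hx₀pos) (Real.rpow_pos_of_pos hx₀pos _), rfl⟩
  have hupper : ∀ x, x₀ ≤ x → b x ≤ K * x ^ γ := by
    intro x hx
    have hxpos : 0 < x := lt_of_lt_of_le hx₀pos hx
    have h : b x * x ^ (-γ) ≤ b x₀ * x₀ ^ (-γ) := hanti Set.self_mem_Ici hx hx
    have hxγ : 0 < x ^ γ := Real.rpow_pos_of_pos hxpos _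
    have hinv : x ^ (-γ) * x ^ γ = 1 := by
      rw [← Real.rpow_add hxpos]; simp
    calc b x = b x * x ^ (-γ) * x ^ γ := by rw [mul_assoc, hinv, mul_one]
    _ ≤ b x₀ * x₀ ^ (-γ) * x ^ γ := mul_le_mul_of_nonneg_right h hxγ.le
    _ = K * x ^ γ := by rw [hKdef]
  -- lower bound on b u for u ∈ [x/2, x]
  have hlow : ∀ x, 2 * x₀ ≤ x → ∀ u ∈ Set.Icc (x/2) x, (2:ℝ) ^ (-γ) * b x ≤ b u := by
    intro x hx u hu
    have hxpos : 0 < x := lt_of_lt_of_le (by linarith) hx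
    have hu0 : x₀ ≤ u := le_trans (by linarith [hu.1]) hu.1
    have hupos : 0 < u := lt_of_lt_of_le hx₀pos hu0
    have h : b x * x ^ (-γ) ≤ b u * u ^ (-γ) :=
      hanti (Set.mem_Ici.mpr hu0) (Set.mem_Ici.mpr (le_trans hu0 hu.2)) hu.2
    have huγ : 0 < u ^ γ := Real.rpow_pos_of_pos hupos _
    have hinv : u ^ (-γ) * u ^ γ = 1 := by rw [← Real.rpow_add hupos]; simp
    have h2 : b x * x ^ (-γ) * u ^ γ ≤ b u := by
      calc b x * x ^ (-γ) * u ^ γ ≤ b u * u ^ (-γ) * u ^ γ :=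
            mul_le_mul_of_nonneg_right h huγ.le
      _ = b u := by rw [mul_assoc, hinv, mul_one]
    have huge : (x/2) ^ γ ≤ u ^ γ := Real.rpow_le_rpow (by linarith) hu.1 hγ0.le
    have hxh : (x/2) ^ γ = x ^ γ / 2 ^ γ := Real.div_rpow hxpos.le (by norm_num) γ
    have h2γ : (2:ℝ) ^ (-γ) = ((2:ℝ) ^ γ)⁻¹ := Real.rpow_neg (by norm_num) γ
    have hinvx : x ^ (-γ) * x ^ γ = 1 := by rw [← Real.rpow_add hxpos]; simp
    have hxneg : 0 < x ^ (-γ) := Real.rpow_pos_of_pos hxpos _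
    have hbx : 0 ≤ b x := (hbpos x hxpos).le
    calc (2:ℝ) ^ (-γ) * b x = b x * x ^ (-γ) * (x/2) ^ γ := by
          rw [hxh, h2γ,
            show b x * x ^ (-γ) * (x ^ γ / 2 ^ γ) = b x * (x ^ (-γ) * x ^ γ) * ((2:ℝ) ^ γ)⁻¹ by ring,
            hinvx]
          ring
    _ ≤ b x * x ^ (-γ) * u ^ γ := mul_le_mul_of_nonneg_left huge (mul_nonneg hbx hxneg.le)
    _ ≤ b u := h2
  -- integrability
  have hInt : ∀ c d : ℝ, 0 ≤ c → c ≤ d → IntervalIntegrable b MeasureTheory.volume c d := by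
    intro c d hc hcd
    apply ContinuousOn.intervalIntegrable
    apply hcont.mono
    rw [Set.uIcc_of_le hcd]
    intro y hy; exact le_trans hc hy.1
  -- B nonneg
  have hBnn : ∀ x, 0 ≤ x → 0 ≤ ∫ u in (0:ℝ)..x, b u := by
    intro x hx
    exact intervalIntegral.integral_nonneg hx (fun u hu => hb0 u hu.1)
  -- lower bound on B
  have hBlow : ∀ x, 2 * x₀ ≤ x → (x/2) * ((2:ℝ) ^ (-γ) * b x) ≤ ∫ u in (0:ℝ)..x, b u := by
    intro x hx
    have hxpos : 0 < x := lt_of_lt_of_le (by linarith) hx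
    have h1 : (∫ u in (0:ℝ)..(x/2), b u) + ∫ u in (x/2)..x, b u = ∫ u in (0:ℝ)..x, b u :=
      intervalIntegral.integral_add_adjacent_intervals (hInt 0 (x/2) le_rfl (by linarith))
        (hInt (x/2) x (by linarith) (by linarith))
    have h2 : 0 ≤ ∫ u in (0:ℝ)..(x/2), b u := hBnn (x/2) (by linarith)
    have h3 : (x/2) * ((2:ℝ) ^ (-γ) * b x) ≤ ∫ u in (x/2)..x, b u := by
      have h4 := intervalIntegral.integral_mono_on (f := fun _ => (2:ℝ) ^ (-γ) * b x)
        (by linarith : x/2 ≤ x) (intervalIntegrable_const) (hInt (x/2) x (by linarith) (by linarith))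
        (hlow x hx)
      rw [intervalIntegral.integral_const, smul_eq_mul] at h4
      calc (x/2) * ((2:ℝ) ^ (-γ) * b x) = (x - x/2) * ((2:ℝ) ^ (-γ) * b x) := by ring
      _ ≤ _ := h4
    linarith
  -- exponents
  obtain ⟨p, hp0, hp1, hpdef⟩ : ∃ p : ℝ, 0 < p ∧ p < 1 ∧ p = 2 * γ / (γ + 1) := by
    refine ⟨2 * γ / (γ + 1), ?_, ?_, rfl⟩
    · apply div_pos <;> linarith
    · rw [div_lt_one (by linarith)]; linarith
  obtain ⟨q, hq0, hqdef⟩ : ∃ q : ℝ, 0 < q ∧ q = γ⁻¹ + 1 := ⟨_, by positivity, rfl⟩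
  have hqp : q * p = 2 := by
    rw [hqdef, hpdef]
    field_simp
    ring
  -- the constant c₂
  obtain ⟨c₂, hc₂, hc₂def⟩ : ∃ c₂ : ℝ, 0 < c₂ ∧ c₂ = (2:ℝ) ^ (-γ - 1) * K ^ (-γ⁻¹) :=
    ⟨_, mul_pos (Real.rpow_pos_of_pos (by norm_num) _) (Real.rpow_pos_of_pos hK _), rfl⟩
  -- main estimate for x ≥ 2x₀
  have hmain : ∀ x, 2 * x₀ ≤ x → c₂ * (b x) ^ q ≤ ∫ u in (0:ℝ)..x, b u := by
    intro x hx
    have hxpos : 0 < x := lt_of_lt_of_le (by linarith) hx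
    have hbx : 0 < b x := hbpos x hxpos
    have hub := hupper x (by linarith)
    have hxγ : b x / K ≤ x ^ γ := (div_le_iff₀' hK).mpr hub
    have hxlow : (b x / K) ^ γ⁻¹ ≤ x := by
      calc (b x / K) ^ γ⁻¹ ≤ (x ^ γ) ^ γ⁻¹ :=
            Real.rpow_le_rpow (by positivity) hxγ (by positivity)
      _ = x := by
            rw [← Real.rpow_mul hxpos.le, mul_inv_cancel₀ hγ0.ne', Real.rpow_one]
    have hBl := hBlow x hx
    have hsplit : (b x / K) ^ γ⁻¹ = (b x) ^ γ⁻¹ * (K ^ γ⁻¹)⁻¹ := by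
      rw [Real.div_rpow hbx.le hK.le]; ring
    have hKinv : K ^ (-γ⁻¹) = (K ^ γ⁻¹)⁻¹ := Real.rpow_neg hK.le _
    have h2split : (2:ℝ) ^ (-γ - 1) = (2:ℝ) ^ (-γ) * (2:ℝ)⁻¹ := by
      rw [show -γ - 1 = -γ + (-1) by ring, Real.rpow_add (by norm_num : (0:ℝ) < 2),
        Real.rpow_neg_one]
    have hbq : (b x) ^ q = (b x) ^ γ⁻¹ * b x := by
      rw [hqdef, Real.rpow_add hbx, Real.rpow_one]
    have h2γpos : 0 < (2:ℝ) ^ (-γ) := Real.rpow_pos_of_pos (by norm_num) _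
    calc c₂ * (b x) ^ q = ((b x) ^ γ⁻¹ * (K ^ γ⁻¹)⁻¹) / 2 * ((2:ℝ) ^ (-γ) * b x) := by
          rw [hc₂def, hbq, h2split, hKinv]; ring
    _ = ((b x / K) ^ γ⁻¹) / 2 * ((2:ℝ) ^ (-γ) * b x) := by rw [hsplit]
    _ ≤ (x / 2) * ((2:ℝ) ^ (-γ) * b x) := by
          apply mul_le_mul_of_nonneg_right _ (by positivity)
          linarith
    _ ≤ ∫ u in (0:ℝ)..x, b u := hBl
  -- the bound on the compact part
  obtain ⟨M, hM⟩ := (isCompact_Icc (a := (0:ℝ)) (b := 2 * x₀)).exists_bound_of_continuousOn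
    (hcont.mono (fun y hy => hy.1))
  have hMnn : 0 ≤ M := le_trans (norm_nonneg _) (hM 0 ⟨le_rfl, by linarith⟩)
  -- final constants
  refine ⟨2 - p, ⟨by linarith, by linarith⟩, M ^ 2 + 1 + (c₂ ^ p)⁻¹, ?_⟩
  intro x hx
  have h2p : (2:ℝ) - (2 - p) = p := by ring
  rw [h2p]
  have hBp : 0 ≤ (∫ u in (0:ℝ)..x, b u) ^ p := Real.rpow_nonneg (hBnn x hx) _
  have hc₂p : 0 < c₂ ^ p := Real.rpow_pos_of_pos hc₂ _
  have hc₂pi : 0 ≤ (c₂ ^ p)⁻¹ := inv_nonneg.mpr hc₂p.le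
  by_cases hcase : x ≤ 2 * x₀
  · -- compact part
    have hb2 : b x ^ 2 ≤ M ^ 2 := by
      have h5 := hM x ⟨hx, hcase⟩
      rw [Real.norm_eq_abs] at h5
      nlinarith [sq_abs (b x), abs_nonneg (b x)]
    have hC0 : (0:ℝ) ≤ M ^ 2 + 1 + (c₂ ^ p)⁻¹ := by positivity
    calc b x ^ 2 ≤ M ^ 2 := hb2
    _ ≤ (M ^ 2 + 1 + (c₂ ^ p)⁻¹) * 1 := by rw [mul_one]; linarith
    _ ≤ (M ^ 2 + 1 + (c₂ ^ p)⁻¹) * (1 + (∫ u in (0:ℝ)..x, b u) ^ p) :=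
        mul_le_mul_of_nonneg_left (by linarith) hC0
  · push_neg at hcase
    have hxpos : 0 < x := lt_of_le_of_lt (by linarith) hcase
    have hbx : 0 < b x := hbpos x hxpos
    have hm := hmain x hcase.le
    have hBpos : 0 < ∫ u in (0:ℝ)..x, b u :=
      lt_of_lt_of_le (by positivity) hm
    have hkey : (b x) ^ (2:ℝ) ≤ (c₂ ^ p)⁻¹ * (∫ u in (0:ℝ)..x, b u) ^ p := by
      have h1 : (b x) ^ q ≤ (∫ u in (0:ℝ)..x, b u) / c₂ := (le_div_iff₀' hc₂).mpr hm
      have h2 : ((b x) ^ q) ^ p ≤ ((∫ u in (0:ℝ)..x, b u) / c₂) ^ p :=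
        Real.rpow_le_rpow (by positivity) h1 hp0.le
      rw [← Real.rpow_mul hbx.le, hqp] at h2
      rw [Real.div_rpow hBpos.le hc₂.le] at h2
      calc (b x) ^ (2:ℝ) ≤ (∫ u in (0:ℝ)..x, b u) ^ p / c₂ ^ p := h2
      _ = (c₂ ^ p)⁻¹ * (∫ u in (0:ℝ)..x, b u) ^ p := by ring
    have hnat : (b x) ^ 2 = (b x) ^ (2:ℝ) := by
      rw [show ((2:ℝ)) = ((2:ℕ):ℝ) by norm_num, Real.rpow_natCast]
    rw [hnat]
    have hC0 : (0:ℝ) ≤ M ^ 2 + 1 + (c₂ ^ p)⁻¹ := by positivity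
    calc b x ^ (2:ℝ) ≤ (c₂ ^ p)⁻¹ * (∫ u in (0:ℝ)..x, b u) ^ p := hkey
    _ ≤ (M ^ 2 + 1 + (c₂ ^ p)⁻¹) * (∫ u in (0:ℝ)..x, b u) ^ p :=
        mul_le_mul_of_nonneg_right (by nlinarith [sq_nonneg M]) hBp
    _ ≤ (M ^ 2 + 1 + (c₂ ^ p)⁻¹) * (1 + (∫ u in (0:ℝ)..x, b u) ^ p) :=
        mul_le_mul_of_nonneg_left (by linarith) hC0
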